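/- Let G be a compact Hausdorff group and let H₁, H₂ be closed subgroups of G with H₁ ⊆ H₂ or H₂ ⊆ H₁. Then for every continuous finite-dimensional irreducible unitary representation σ of H₁ and every complex Hilbert space 𝓗 carrying a continuous unitary representation of G, the isotypical projection p_σ on 𝓗 is H₂-harmonically proper; in particular p_σ ∈ 𝒜_{H₂}(𝓗), the operator-norm closure of the H₂-harmonically proper operators on 𝓗. -/

import Mathlib

open MeasureTheory ComplexConjugate Matrix

noncomputable section

/-- A continuous finite-dimensional unitary (matrix) representation of a topological group. -/
structure FinUnitaryRep (Γ : Type) [Group Γ] [TopologicalSpace Γ] where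
  dim : ℕ
  ρ : Γ →* Matrix.unitaryGroup (Fin dim) ℂ
  cont : Continuous fun g => (ρ g : Matrix (Fin dim) (Fin dim) ℂ)

namespace FinUnitaryRep

variable {Γ : Type} [Group Γ] [TopologicalSpace Γ]

/-- The character of a finite-dimensional representation. -/
def char (σ : FinUnitaryRep Γ) : Γ → ℂ :=
  fun g => Matrix.trace ((σ.ρ g : Matrix (Fin σ.dim) (Fin σ.dim) ℂ))

/-- Irreducibility: no nontrivial invariant subspace (and nonzero). -/
def IsIrreducible (σ : FinUnitaryRep Γ) : Prop :=
  0 < σ.dim ∧ ∀ W : Submodule ℂ (Fin σ.dim → ℂ),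
    (∀ g : Γ, ∀ v ∈ W, Matrix.mulVec ((σ.ρ g : Matrix (Fin σ.dim) (Fin σ.dim) ℂ)) v ∈ W) →
    W = ⊥ ∨ W = ⊤

/-- Restriction of a representation along a continuous group homomorphism. -/
@[reducible] def res {Δ : Type} [Group Δ] [TopologicalSpace Δ] (f : Δ →* Γ) (hf : Continuous f)
    (π : FinUnitaryRep Γ) : FinUnitaryRep Δ :=
  ⟨π.dim, π.ρ.comp f, π.cont.comp hf⟩

end FinUnitaryRep

variable {Γ : Type} [Group Γ] [TopologicalSpace Γ] [MeasurableSpace Γ]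

/-- The isotypical projection `p_σ = (dim σ) ∫ conj (χ_σ h) U h dμ(h)` associated to an
irreducible representation `σ`, for a representation `U` on a normed space. -/
def isoProj (μ : Measure Γ) {E : Type} [NormedAddCommGroup E] [NormedSpace ℂ E]
    (U : Γ →* (E →L[ℂ] E)) (σ : FinUnitaryRep Γ) : E →L[ℂ] E :=
  (σ.dim : ℂ) • ∫ h, (conj (σ.char h)) • U h ∂μ

/-- The isotypical projection on the representation space of a finite-dimensional
representation `π`, associated to an irreducible representation `σ`. -/
def isoVecProj (μ : Measure Γ) (π : FinUnitaryRep Γ) (σ : FinUnitaryRep Γ)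
    (v : Fin π.dim → ℂ) : Fin π.dim → ℂ :=
  (σ.dim : ℂ) • ∫ h, (conj (σ.char h)) • Matrix.mulVec ((π.ρ h : Matrix (Fin π.dim) (Fin π.dim) ℂ)) v ∂μ

variable {E₁ E₂ : Type} [NormedAddCommGroup E₁] [NormedSpace ℂ E₁]
  [NormedAddCommGroup E₂] [NormedSpace ℂ E₂]

/-- `B` is harmonically finite if `p_σ B p_τ = 0` for all but finitely many pairs of
(unitary equivalence classes of) irreducible representations, identified by their characters. -/
def HarmonicallyFinite (μ : Measure Γ) (U₁ : Γ →* (E₁ →L[ℂ] E₁)) (U₂ : Γ →* (E₂ →L[ℂ] E₂))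
    (B : E₁ →L[ℂ] E₂) : Prop :=
  {χ : (Γ → ℂ) × (Γ → ℂ) | ∃ σ τ : FinUnitaryRep Γ, σ.IsIrreducible ∧ τ.IsIrreducible ∧
    χ.1 = σ.char ∧ χ.2 = τ.char ∧
    (isoProj μ U₂ σ).comp (B.comp (isoProj μ U₁ τ)) ≠ 0}.Finite

/-- `B` is harmonically proper if each row and column of its harmonic matrix is finite. -/
def HarmonicallyProper (μ : Measure Γ) (U₁ : Γ →* (E₁ →L[ℂ] E₁)) (U₂ : Γ →* (E₂ →L[ℂ] E₂))
    (B : E₁ →L[ℂ] E₂) : Prop :=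
  ∀ σ : FinUnitaryRep Γ, σ.IsIrreducible →
    {χ : Γ → ℂ | ∃ τ : FinUnitaryRep Γ, τ.IsIrreducible ∧ χ = τ.char ∧
      ((isoProj μ U₂ σ).comp (B.comp (isoProj μ U₁ τ)) ≠ 0 ∨
       (isoProj μ U₂ τ).comp (B.comp (isoProj μ U₁ σ)) ≠ 0)}.Finite

/-- The operator-norm closure of the harmonically finite operators. -/
def KH (μ : Measure Γ) (U₁ : Γ →* (E₁ →L[ℂ] E₁)) (U₂ : Γ →* (E₂ →L[ℂ] E₂)) :
    Set (E₁ →L[ℂ] E₂) :=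
  closure {B | HarmonicallyFinite μ U₁ U₂ B}

/-- The operator-norm closure of the harmonically proper operators. -/
def AH (μ : Measure Γ) (U₁ : Γ →* (E₁ →L[ℂ] E₁)) (U₂ : Γ →* (E₂ →L[ℂ] E₂)) :
    Set (E₁ →L[ℂ] E₂) :=
  closure {B | HarmonicallyProper μ U₁ U₂ B}

end

noncomputable section auxproof

open MeasureTheory ComplexConjugate Matrix

section basiclem

variable {Γ : Type} [Group Γ] [TopologicalSpace Γ]

lemma FinUnitaryRep.continuous_char (σ : FinUnitaryRep Γ) : Continuous σ.char := by
  have h : ∀ i : Fin σ.dim,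
      Continuous fun g => (σ.ρ g : Matrix (Fin σ.dim) (Fin σ.dim) ℂ) i i :=
    fun i => (continuous_apply i).comp ((continuous_apply i).comp σ.cont)
  have : σ.char = fun g => ∑ i, (σ.ρ g : Matrix (Fin σ.dim) (Fin σ.dim) ℂ) i i := by
    funext g; rfl
  rw [this]
  exact continuous_finset_sum _ fun i _ => h i

lemma FinUnitaryRep.coe_mul' (σ : FinUnitaryRep Γ) (a b : Γ) :
    ((σ.ρ (a * b) : Matrix (Fin σ.dim) (Fin σ.dim) ℂ))
      = (σ.ρ a : Matrix (Fin σ.dim) (Fin σ.dim) ℂ)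
        * (σ.ρ b : Matrix (Fin σ.dim) (Fin σ.dim) ℂ) := by
  rw [_root_.map_mul]; rfl

lemma FinUnitaryRep.char_mul_comm (σ : FinUnitaryRep Γ) (a b : Γ) :
    σ.char (a * b) = σ.char (b * a) := by
  unfold FinUnitaryRep.char
  rw [σ.coe_mul', σ.coe_mul', Matrix.trace_mul_comm]

lemma integrable_of_cont {X E : Type*} [TopologicalSpace X] [CompactSpace X] [MeasurableSpace X]
    [OpensMeasurableSpace X] [NormedAddCommGroup E] {f : X → E} (hf : Continuous f)
    (μ : Measure X) [IsFiniteMeasureOnCompacts μ] : Integrable f μ :=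
  hf.integrable_of_hasCompactSupport (isClosed_tsupport f).isCompact

end basiclem

section rightinv

variable {Γ : Type*} [Group Γ] [TopologicalSpace Γ] [IsTopologicalGroup Γ] [CompactSpace Γ]
  [MeasurableSpace Γ] [BorelSpace Γ]

lemma haar_right_invariant (μ : Measure Γ) [μ.IsHaarMeasure] [IsProbabilityMeasure μ] :
    μ.IsMulRightInvariant := by
  constructor
  intro g
  have hmeas : Measurable (· * g : Γ → Γ) := measurable_mul_const g
  have hprob : IsProbabilityMeasure (Measure.map (· * g) μ) :=
    Measure.isProbabilityMeasure_map hmeas.aemeasurable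
  have h := Measure.isMulInvariant_eq_smul_of_compactSpace (Measure.map (· * g) μ) μ
  have h2 : (Measure.map (· * g) μ).haarScalarFactor μ = 1 := by
    have h1 := congrArg (fun ν : Measure Γ => ν Set.univ) h
    simp only [Measure.smul_apply, measure_univ, ENNReal.smul_def, smul_eq_mul, mul_one] at h1
    exact_mod_cast h1.symm
  rw [h, h2, one_smul]

end rightinv

section projlem

variable {Γ : Type} [Group Γ] [TopologicalSpace Γ] [MeasurableSpace Γ]
  {E : Type} [NormedAddCommGroup E] [NormedSpace ℂ E]

lemma isoProj_eq_zero (μ : Measure Γ) (U : Γ →* (E →L[ℂ] E)) (σ : FinUnitaryRep Γ)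
    (h : ¬ Integrable (fun g => (conj (σ.char g)) • U g) μ) : isoProj μ U σ = 0 := by
  rw [isoProj, integral_undef h, smul_zero]

lemma isoProj_apply (μ : Measure Γ) (U : Γ →* (E →L[ℂ] E)) (σ : FinUnitaryRep Γ)
    (hI : Integrable (fun g => (conj (σ.char g)) • U g) μ) (ξ : E) :
    isoProj μ U σ ξ = (σ.dim : ℂ) • ∫ g, conj (σ.char g) • U g ξ ∂μ := by
  rw [isoProj, ContinuousLinearMap.smul_apply, ContinuousLinearMap.integral_apply hI]
  simp only [ContinuousLinearMap.smul_apply]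

lemma comm_integral [CompleteSpace E] (μ : Measure Γ) (U : Γ →* (E →L[ℂ] E)) (f : Γ → ℂ)
    (hI : Integrable (fun g => f g • U g) μ) (A : E →L[ℂ] E)
    (hA : ∀ g, A.comp (U g) = (U g).comp A) :
    A.comp (∫ g, f g • U g ∂μ) = (∫ g, f g • U g ∂μ).comp A := by
  have e1 : A.comp (∫ g, f g • U g ∂μ) = (ContinuousLinearMap.compL ℂ E E E A) (∫ g, f g • U g ∂μ) := rfl
  have e2 : (∫ g, f g • U g ∂μ).comp A
      = ((ContinuousLinearMap.compL ℂ E E E).flip A) (∫ g, f g • U g ∂μ) := rfl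
  rw [e1, e2, ← (ContinuousLinearMap.compL ℂ E E E A).integral_comp_comm hI,
      ← ((ContinuousLinearMap.compL ℂ E E E).flip A).integral_comp_comm hI]
  congr 1; funext g
  simp only [ContinuousLinearMap.flip_apply, ContinuousLinearMap.compL_apply,
    ContinuousLinearMap.smul_comp, ContinuousLinearMap.comp_smul, hA]

lemma isoProj_comm [CompleteSpace E] (μ : Measure Γ) (U : Γ →* (E →L[ℂ] E))
    (σ : FinUnitaryRep Γ) (A : E →L[ℂ] E) (hA : ∀ g, A.comp (U g) = (U g).comp A) :
    A.comp (isoProj μ U σ) = (isoProj μ U σ).comp A := by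
  by_cases hI : Integrable (fun g => (conj (σ.char g)) • U g) μ
  · rw [isoProj, ContinuousLinearMap.comp_smul, ContinuousLinearMap.smul_comp,
      comm_integral μ U _ hI A hA]
  · rw [isoProj_eq_zero μ U σ hI]; simp

end projlem

end auxproof

noncomputable section auxproof2

open MeasureTheory ComplexConjugate Matrix

section commU

variable {Γ : Type} [Group Γ] [TopologicalSpace Γ] [IsTopologicalGroup Γ] [CompactSpace Γ]
  [MeasurableSpace Γ] [BorelSpace Γ]
  {E : Type} [NormedAddCommGroup E] [NormedSpace ℂ E] [CompleteSpace E]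

lemma isoProj_comm_U (μ : Measure Γ) [μ.IsHaarMeasure] [IsProbabilityMeasure μ]
    (U : Γ →* (E →L[ℂ] E)) (σ : FinUnitaryRep Γ)
    (hI : Integrable (fun g => (conj (σ.char g)) • U g) μ) (k : Γ) :
    (U k).comp (isoProj μ U σ) = (isoProj μ U σ).comp (U k) := by
  haveI := haar_right_invariant μ
  set f : Γ → ℂ := fun g => conj (σ.char g) with hf
  rw [isoProj, ContinuousLinearMap.comp_smul, ContinuousLinearMap.smul_comp]
  congr 1
  have e1 : (U k).comp (∫ g, f g • U g ∂μ) = ∫ g, f g • ((U k).comp (U g)) ∂μ := by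
    have e0 : (U k).comp (∫ g, f g • U g ∂μ)
        = (ContinuousLinearMap.compL ℂ E E E (U k)) (∫ g, f g • U g ∂μ) := rfl
    rw [e0, ← (ContinuousLinearMap.compL ℂ E E E (U k)).integral_comp_comm hI]
    refine integral_congr_ae (Filter.Eventually.of_forall fun g => ?_)
    simp only [ContinuousLinearMap.compL_apply, ContinuousLinearMap.comp_smul]
    rfl
  have e1' : (∫ g, f g • U g ∂μ).comp (U k) = ∫ g, f g • ((U g).comp (U k)) ∂μ := by
    have e0 : (∫ g, f g • U g ∂μ).comp (U k)
        = ((ContinuousLinearMap.compL ℂ E E E).flip (U k)) (∫ g, f g • U g ∂μ) := rfl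
    rw [e0, ← ((ContinuousLinearMap.compL ℂ E E E).flip (U k)).integral_comp_comm hI]
    refine integral_congr_ae (Filter.Eventually.of_forall fun g => ?_)
    simp only [ContinuousLinearMap.flip_apply, ContinuousLinearMap.compL_apply,
      ContinuousLinearMap.smul_comp]
    rfl
  have e2 : ∀ g : Γ, (U k).comp (U g) = U (k * g) := fun g => by
    rw [_root_.map_mul]; rfl
  have e2' : ∀ g : Γ, (U g).comp (U k) = U (g * k) := fun g => by
    rw [_root_.map_mul]; rfl
  rw [e1, e1']
  simp only [e2, e2']
  have e3 : ∫ g, f g • U (k * g) ∂μ = ∫ g, f (k⁻¹ * g) • U g ∂μ := by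
    have := integral_mul_left_eq_self (μ := μ) (fun g => f (k⁻¹ * g) • U g) k
    rw [← this]
    congr 1; funext g
    simp [inv_mul_cancel_left]
  have e3' : ∫ g, f g • U (g * k) ∂μ = ∫ g, f (g * k⁻¹) • U g ∂μ := by
    have := integral_mul_right_eq_self (μ := μ) (fun g => f (g * k⁻¹) • U g) k
    rw [← this]
    congr 1; funext g
    simp [mul_inv_cancel_right]
  rw [e3, e3']
  have : ∀ g : Γ, f (k⁻¹ * g) = f (g * k⁻¹) := fun g => by
    simp only [hf]
    rw [σ.char_mul_comm k⁻¹ g]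
  simp only [this]

end commU

end auxproof2

noncomputable section auxproof3

open MeasureTheory ComplexConjugate Matrix

lemma trace_toLin'_eq {n : ℕ} (M : Matrix (Fin n) (Fin n) ℂ) :
    LinearMap.trace ℂ (Fin n → ℂ) (Matrix.toLin' M) = Matrix.trace M := by
  rw [LinearMap.trace_eq_matrix_trace ℂ (Pi.basisFun ℂ (Fin n)),
    LinearMap.toMatrix_eq_toMatrix', LinearMap.toMatrix'_toLin']

section schur

variable {Γ : Type} [Group Γ] [TopologicalSpace Γ] [IsTopologicalGroup Γ] [CompactSpace Γ]
  [MeasurableSpace Γ] [BorelSpace Γ]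

lemma FinUnitaryRep.entry_continuous (σ : FinUnitaryRep Γ) (i j : Fin σ.dim) :
    Continuous fun g => (σ.ρ g : Matrix (Fin σ.dim) (Fin σ.dim) ℂ) i j :=
  (continuous_apply j).comp ((continuous_apply i).comp σ.cont)

lemma schur_conv (μ : Measure Γ) [μ.IsHaarMeasure] [IsProbabilityMeasure μ]
    (σ τ : FinUnitaryRep Γ) (hσ : σ.IsIrreducible) (hτ : τ.IsIrreducible)
    (hne : σ.char ≠ τ.char) (g : Γ) :
    ∫ h, σ.char h * τ.char (h⁻¹ * g) ∂μ = 0 := by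
  classical
  set S : Γ → Matrix (Fin σ.dim) (Fin σ.dim) ℂ := fun h => (σ.ρ h : _) with hSdef
  set T : Γ → Matrix (Fin τ.dim) (Fin τ.dim) ℂ := fun h => (τ.ρ h : _) with hTdef
  have hSmul : ∀ a b : Γ, S (a * b) = S a * S b := fun a b => σ.coe_mul' a b
  have hTmul : ∀ a b : Γ, T (a * b) = T a * T b := fun a b => τ.coe_mul' a b
  have hScont : Continuous S := σ.cont
  have hTcont : Continuous T := τ.cont
  have hTinvcont : Continuous fun h => T h⁻¹ := hTcont.comp continuous_inv
  -- the averaged intertwiner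
  set TT : Matrix (Fin σ.dim) (Fin τ.dim) ℂ → Matrix (Fin σ.dim) (Fin τ.dim) ℂ :=
    fun A => Matrix.of fun i j => ∫ h, (S h * A * T h⁻¹) i j ∂μ with hTTdef
  have hprodcont : ∀ A : Matrix (Fin σ.dim) (Fin τ.dim) ℂ,
      Continuous fun h => S h * A * T h⁻¹ :=
    fun A => (hScont.matrix_mul continuous_const).matrix_mul hTinvcont
  have hentrycont : ∀ (A : Matrix (Fin σ.dim) (Fin τ.dim) ℂ) (i : Fin σ.dim) (j : Fin τ.dim),
      Continuous fun h => (S h * A * T h⁻¹) i j :=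
    fun A i j => (continuous_apply j).comp ((continuous_apply i).comp (hprodcont A))
  have hTTint : ∀ (A : Matrix (Fin σ.dim) (Fin τ.dim) ℂ) (i : Fin σ.dim) (j : Fin τ.dim),
      Integrable (fun h => (S h * A * T h⁻¹) i j) μ :=
    fun A i j => integrable_of_cont (hentrycont A i j) μ
  have hTTapp : ∀ (A : Matrix (Fin σ.dim) (Fin τ.dim) ℂ) (i : Fin σ.dim) (j : Fin τ.dim),
      TT A i j = ∫ h, (S h * A * T h⁻¹) i j ∂μ := fun A i j => rfl
  -- intertwining property
  have hinter : ∀ (A : Matrix (Fin σ.dim) (Fin τ.dim) ℂ) (k : Γ),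
      S k * TT A = TT A * T k := by
    intro A k
    ext i j
    have l1 : (S k * TT A) i j = ∫ h, (S k * (S h * A * T h⁻¹)) i j ∂μ := by
      rw [Matrix.mul_apply]
      have step : ∀ l, S k i l * (TT A) l j = ∫ h, S k i l * (S h * A * T h⁻¹) l j ∂μ := by
        intro l
        rw [hTTapp, ← integral_const_mul]
      simp_rw [step]
      rw [← integral_finset_sum _ (fun l _ => (hTTint A l j).const_mul _)]
      refine integral_congr_ae (Filter.Eventually.of_forall fun h => ?_)
      simp [Matrix.mul_apply]
    have l2 : ∫ h, (S k * (S h * A * T h⁻¹)) i j ∂μ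
        = ∫ h, (S h * A * T (h⁻¹ * k)) i j ∂μ := by
      have := integral_mul_left_eq_self (μ := μ) (fun h => (S h * A * T (h⁻¹ * k)) i j) k
      rw [← this]
      refine integral_congr_ae (Filter.Eventually.of_forall fun h => ?_)
      show (S k * (S h * A * T h⁻¹)) i j = (S (k * h) * A * T ((k * h)⁻¹ * k)) i j
      have hk : (k * h)⁻¹ * k = h⁻¹ := by group
      rw [hk, hSmul k h]
      simp only [Matrix.mul_assoc]
    have l3 : ∫ h, (S h * A * T (h⁻¹ * k)) i j ∂μ = (TT A * T k) i j := by
      rw [Matrix.mul_apply]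
      have step : ∀ l, (TT A) i l * T k l j = ∫ h, (S h * A * T h⁻¹) i l * T k l j ∂μ := by
        intro l
        rw [hTTapp, ← integral_mul_const]
      simp_rw [step]
      rw [← integral_finset_sum _ (fun l _ => (hTTint A i l).mul_const _)]
      refine integral_congr_ae (Filter.Eventually.of_forall fun h => ?_)
      show (S h * A * T (h⁻¹ * k)) i j = ∑ l, (S h * A * T h⁻¹) i l * T k l j
      rw [hTmul, ← Matrix.mul_assoc, Matrix.mul_apply]
    rw [l1, l2, l3]
  -- Schur's lemma: the intertwiner vanishes
  have hTT0 : ∀ A : Matrix (Fin σ.dim) (Fin τ.dim) ℂ, TT A = 0 := by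
    intro A
    by_contra hA0
    have hmulvec : ∀ (k : Γ) (v : Fin τ.dim → ℂ),
        TT A *ᵥ (T k *ᵥ v) = S k *ᵥ (TT A *ᵥ v) := by
      intro k v
      rw [Matrix.mulVec_mulVec, Matrix.mulVec_mulVec, ← hinter A k]
    set φ : (Fin τ.dim → ℂ) →ₗ[ℂ] (Fin σ.dim → ℂ) := Matrix.mulVecLin (TT A) with hφdef
    have hφapp : ∀ v, φ v = TT A *ᵥ v := fun v => rfl
    have hφne : φ ≠ 0 := by
      intro h0
      apply hA0
      ext i j
      have := congrFun (congrArg DFunLike.coe h0) (Pi.single j 1)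
      have h1 : TT A *ᵥ Pi.single j 1 = 0 := this
      have h2 := congrFun h1 i
      simpa [Matrix.mulVec_single] using h2
    have hkerinv : ∀ k : Γ, ∀ v ∈ LinearMap.ker φ,
        Matrix.mulVec ((τ.ρ k : Matrix (Fin τ.dim) (Fin τ.dim) ℂ)) v ∈ LinearMap.ker φ := by
      intro k v hv
      rw [LinearMap.mem_ker] at hv ⊢
      show φ (T k *ᵥ v) = 0
      rw [hφapp, hmulvec, ← hφapp, hv, Matrix.mulVec_zero]
    have hker : LinearMap.ker φ = ⊥ := by
      rcases hτ.2 (LinearMap.ker φ) hkerinv with h | h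
      · exact h
      · exact absurd (LinearMap.ker_eq_top.mp h) hφne
    have hrangeinv : ∀ k : Γ, ∀ w ∈ LinearMap.range φ,
        Matrix.mulVec ((σ.ρ k : Matrix (Fin σ.dim) (Fin σ.dim) ℂ)) w ∈ LinearMap.range φ := by
      rintro k w ⟨v, rfl⟩
      exact ⟨T k *ᵥ v, by rw [hφapp, hφapp, hmulvec]⟩
    have hrange : LinearMap.range φ = ⊤ := by
      rcases hσ.2 (LinearMap.range φ) hrangeinv with h | h
      · exact absurd (LinearMap.range_eq_bot.mp h) hφne
      · exact h
    set e : (Fin τ.dim → ℂ) ≃ₗ[ℂ] (Fin σ.dim → ℂ) :=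
      LinearEquiv.ofBijective φ ⟨LinearMap.ker_eq_bot.mp hker, LinearMap.range_eq_top.mp hrange⟩
      with hedef
    have heapp : ∀ v, e v = TT A *ᵥ v := fun v => rfl
    have hcharseq : σ.char = τ.char := by
      funext k
      have h1 : Matrix.toLin' (S k) = e.conj (Matrix.toLin' (T k)) := by
        apply LinearMap.ext; intro v
        rw [LinearEquiv.conj_apply]
        simp only [LinearMap.coe_comp, Function.comp_apply, LinearEquiv.coe_coe,
          Matrix.toLin'_apply]
        rw [heapp, hmulvec]
        congr 1
        have : TT A *ᵥ (e.symm v) = e (e.symm v) := (heapp _).symm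
        rw [this, e.apply_symm_apply]
      have h2 : Matrix.trace (S k) = Matrix.trace (T k) := by
        rw [← trace_toLin'_eq, ← trace_toLin'_eq, h1, LinearMap.trace_conj']
      exact h2
    exact hne hcharseq
  -- entrywise consequence
  have hM : ∀ (a b : Fin σ.dim) (j l : Fin τ.dim),
      ∫ h, S h a b * T h⁻¹ j l ∂μ = 0 := by
    intro a b j l
    have h1 : (TT (Matrix.single b j (1 : ℂ))) a l = 0 := by
      rw [hTT0]; rfl
    rw [hTTapp] at h1
    have key : ∀ h : Γ, (S h * Matrix.single b j (1 : ℂ) * T h⁻¹) a l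
        = S h a b * T h⁻¹ j l := by
      intro h
      rw [Matrix.mul_assoc, Matrix.mul_apply]
      have hq : ∀ q, (Matrix.single b j (1 : ℂ) * T h⁻¹) q l
          = if q = b then T h⁻¹ j l else 0 := by
        intro q
        by_cases hqb : q = b
        · subst hqb
          simp [Matrix.mul_apply, Matrix.single, ite_and]
        · simp [Matrix.mul_apply, Matrix.single, ite_and, Ne.symm hqb, hqb]
      simp only [hq, mul_ite, mul_zero]
      rw [Finset.sum_ite_eq' Finset.univ b fun q => S h a q * T h⁻¹ j l]
      simp
    rw [← h1]
    refine integral_congr_ae (Filter.Eventually.of_forall fun h => (key h).symm)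
  -- expand characters and conclude
  have hexp : ∀ h : Γ, σ.char h * τ.char (h⁻¹ * g)
      = ∑ a : Fin σ.dim, ∑ j : Fin τ.dim, ∑ l : Fin τ.dim,
          (S h a a * T h⁻¹ j l) * T g l j := by
    intro h
    have e1 : σ.char h = ∑ a, S h a a := rfl
    have e2 : τ.char (h⁻¹ * g) = ∑ j, (T h⁻¹ * T g) j j := by
      rw [show τ.char (h⁻¹ * g) = Matrix.trace (T (h⁻¹ * g)) from rfl, hTmul]
      rfl
    rw [e1, e2, Finset.sum_mul_sum]
    refine Finset.sum_congr rfl fun a _ => ?_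
    refine Finset.sum_congr rfl fun j _ => ?_
    rw [Matrix.mul_apply, Finset.mul_sum]
    refine Finset.sum_congr rfl fun l _ => ?_
    ring
  calc ∫ h, σ.char h * τ.char (h⁻¹ * g) ∂μ
      = ∫ h, ∑ a : Fin σ.dim, ∑ j : Fin τ.dim, ∑ l : Fin τ.dim,
          (S h a a * T h⁻¹ j l) * T g l j ∂μ := by
        refine integral_congr_ae (Filter.Eventually.of_forall fun h => hexp h)
    _ = 0 := by
        have hint : ∀ (a : Fin σ.dim) (j l : Fin τ.dim),
            Integrable (fun h => (S h a a * T h⁻¹ j l) * T g l j) μ := by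
          intro a j l
          refine integrable_of_cont ?_ μ
          exact ((σ.entry_continuous a a).mul
            (((continuous_apply l).comp ((continuous_apply j).comp hTinvcont)))).mul
            continuous_const
        rw [integral_finset_sum _ (fun a _ => by
          refine integrable_finset_sum _ (fun j _ => ?_)
          exact integrable_finset_sum _ (fun l _ => hint a j l))]
        refine Finset.sum_eq_zero fun a _ => ?_
        rw [integral_finset_sum _ (fun j _ => integrable_finset_sum _ (fun l _ => hint a j l))]
        refine Finset.sum_eq_zero fun j _ => ?_
        rw [integral_finset_sum _ (fun l _ => hint a j l)]
        refine Finset.sum_eq_zero fun l _ => ?_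
        rw [integral_mul_const, hM a a j l, zero_mul]

end schur

end auxproof3

noncomputable section auxproof4

open MeasureTheory ComplexConjugate Matrix

section ortho

variable {Γ : Type} [Group Γ] [TopologicalSpace Γ] [IsTopologicalGroup Γ] [CompactSpace Γ]
  [MeasurableSpace Γ] [BorelSpace Γ]
  {E : Type} [NormedAddCommGroup E] [InnerProductSpace ℂ E] [CompleteSpace E]

lemma isoProj_orthogonal (μ : Measure Γ) [μ.IsHaarMeasure] [IsProbabilityMeasure μ]
    (U : Γ →* (E →L[ℂ] E)) (hUc : ∀ ξ : E, Continuous fun g => U g ξ)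
    (σ τ : FinUnitaryRep Γ) (hσ : σ.IsIrreducible) (hτ : τ.IsIrreducible)
    (hne : σ.char ≠ τ.char) :
    (isoProj μ U σ).comp (isoProj μ U τ) = 0 := by
  by_cases hIτ : Integrable (fun g => (conj (τ.char g)) • U g) μ
  swap
  · rw [isoProj_eq_zero μ U τ hIτ, ContinuousLinearMap.comp_zero]
  by_cases hIσ : Integrable (fun g => (conj (σ.char g)) • U g) μ
  swap
  · rw [isoProj_eq_zero μ U σ hIσ, ContinuousLinearMap.zero_comp]
  have hχσc : Continuous fun g : Γ => conj (σ.char g) :=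
    Complex.continuous_conj.comp σ.continuous_char
  have hχτc : Continuous fun g : Γ => conj (τ.char g) :=
    Complex.continuous_conj.comp τ.continuous_char
  have hvecint : ∀ (ρ : FinUnitaryRep Γ) (ζ : E),
      Integrable (fun g => conj (ρ.char g) • U g ζ) μ := fun ρ ζ =>
    integrable_of_cont ((Complex.continuous_conj.comp ρ.continuous_char).smul (hUc ζ)) μ
  ext η
  rw [ContinuousLinearMap.comp_apply, ContinuousLinearMap.zero_apply]
  set v : E := isoProj μ U τ η with hv
  rw [isoProj_apply μ U σ hIσ v]
  have hw : (∫ g, conj (σ.char g) • U g v ∂μ) = 0 := by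
    set w : E := ∫ g, conj (σ.char g) • U g v ∂μ with hwdef
    have key : ∀ ξ : E, (inner ℂ ξ w : ℂ) = 0 := by
      intro ξ
      set F : Γ → ℂ := fun g => inner ℂ ξ (U g η) with hFdef
      have hFcont : Continuous F := continuous_const.inner (hUc η)
      have hv2 : v = (τ.dim : ℂ) • ∫ k, conj (τ.char k) • U k η ∂μ :=
        isoProj_apply μ U τ hIτ η
      have e2 : ∀ g : Γ, (inner ℂ ξ (U g v) : ℂ)
          = (τ.dim : ℂ) * ∫ k, conj (τ.char (g⁻¹ * k)) * F k ∂μ := by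
        intro g
        rw [hv2, (U g).map_smul, inner_smul_right]
        congr 1
        rw [← (U g).integral_comp_comm (hvecint τ η)]
        have h0 : (inner ℂ ξ (∫ k, (U g) (conj (τ.char k) • U k η) ∂μ) : ℂ)
            = (innerSL ℂ ξ) (∫ k, (U g) (conj (τ.char k) • U k η) ∂μ) := rfl
        rw [h0, ← (innerSL ℂ ξ).integral_comp_comm ((U g).integrable_comp (hvecint τ η))]
        have e21 : ∀ k : Γ, (innerSL ℂ ξ) ((U g) (conj (τ.char k) • U k η))
            = conj (τ.char k) * F (g * k) := by
          intro k
          rw [(U g).map_smul, (innerSL ℂ ξ).map_smul]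
          rw [smul_eq_mul]
          congr 1
          show (inner ℂ ξ ((U g) ((U k) η)) : ℂ) = inner ℂ ξ (U (g * k) η)
          congr 1
          rw [_root_.map_mul]
          rfl
        rw [integral_congr_ae (Filter.Eventually.of_forall e21)]
        have := integral_mul_left_eq_self (μ := μ) (fun k => conj (τ.char (g⁻¹ * k)) * F k) g
        rw [← this]
        refine integral_congr_ae (Filter.Eventually.of_forall fun k => ?_)
        show conj (τ.char k) * F (g * k) = conj (τ.char (g⁻¹ * (g * k))) * F (g * k)
        rw [inv_mul_cancel_left]
      have e1 : (inner ℂ ξ w : ℂ)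
          = ∫ g, conj (σ.char g) * (inner ℂ ξ (U g v) : ℂ) ∂μ := by
        have h0 : (inner ℂ ξ w : ℂ) = (innerSL ℂ ξ) w := rfl
        rw [h0, hwdef, ← (innerSL ℂ ξ).integral_comp_comm (hvecint σ v)]
        refine integral_congr_ae (Filter.Eventually.of_forall fun g => ?_)
        simp [inner_smul_right]
      rw [e1]
      have e3 : ∀ g : Γ, conj (σ.char g) * (inner ℂ ξ (U g v) : ℂ)
          = (τ.dim : ℂ) * ∫ k, (conj (σ.char g) * conj (τ.char (g⁻¹ * k))) * F k ∂μ := by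
        intro g
        rw [e2 g]
        rw [show conj (σ.char g) * ((τ.dim : ℂ) * ∫ k, conj (τ.char (g⁻¹ * k)) * F k ∂μ)
            = (τ.dim : ℂ) * (conj (σ.char g) * ∫ k, conj (τ.char (g⁻¹ * k)) * F k ∂μ) by ring]
        congr 1
        rw [← integral_const_mul]
        refine integral_congr_ae (Filter.Eventually.of_forall fun k => ?_)
        ring
      rw [integral_congr_ae (Filter.Eventually.of_forall e3), integral_const_mul]
      have hswap : ∫ g, ∫ k, (conj (σ.char g) * conj (τ.char (g⁻¹ * k))) * F k ∂μ ∂μ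
          = ∫ k, ∫ g, (conj (σ.char g) * conj (τ.char (g⁻¹ * k))) * F k ∂μ ∂μ := by
        have hcont : Continuous (Function.uncurry
            fun g k : Γ => (conj (σ.char g) * conj (τ.char (g⁻¹ * k))) * F k) := by
          apply Continuous.mul
          · apply Continuous.mul
            · exact hχσc.comp continuous_fst
            · exact hχτc.comp ((continuous_inv.comp continuous_fst).mul continuous_snd)
          · exact hFcont.comp continuous_snd
        exact integral_integral_swap_of_hasCompactSupport hcont
          (isClosed_tsupport _).isCompact
      rw [hswap]
      have e4 : ∀ k : Γ, ∫ g, (conj (σ.char g) * conj (τ.char (g⁻¹ * k))) * F k ∂μ = 0 := by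
        intro k
        rw [integral_mul_const]
        have : ∫ g, conj (σ.char g) * conj (τ.char (g⁻¹ * k)) ∂μ = 0 := by
          have hc : ∀ g : Γ, conj (σ.char g) * conj (τ.char (g⁻¹ * k))
              = conj (σ.char g * τ.char (g⁻¹ * k)) := fun g =>
            ((starRingEnd ℂ).map_mul _ _).symm
          rw [integral_congr_ae (Filter.Eventually.of_forall hc), integral_conj,
            schur_conv μ σ τ hσ hτ hne k, map_zero]
        rw [this, zero_mul]
      rw [integral_congr_ae (Filter.Eventually.of_forall e4), integral_zero, mul_zero]
    exact inner_self_eq_zero.mp (key w)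
  rw [hw, smul_zero]

end ortho

end auxproof4
theorem isoProj_harmonicallyProper_of_nested
    {G : Type} [Group G] [TopologicalSpace G] [IsTopologicalGroup G]
    [CompactSpace G] [T2Space G]
    (H₁ H₂ : Subgroup G) (hH₁ : IsClosed (H₁ : Set G)) (hH₂ : IsClosed (H₂ : Set G))
    (hnested : H₁ ≤ H₂ ∨ H₂ ≤ H₁)
    [MeasurableSpace H₁] [BorelSpace H₁]
    (μ₁ : Measure H₁) [μ₁.IsHaarMeasure] [IsProbabilityMeasure μ₁]
    [MeasurableSpace H₂] [BorelSpace H₂]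
    (μ₂ : Measure H₂) [μ₂.IsHaarMeasure] [IsProbabilityMeasure μ₂]
    (σ : FinUnitaryRep H₁) (hσ : σ.IsIrreducible)
    {𝓗 : Type} [NormedAddCommGroup 𝓗] [InnerProductSpace ℂ 𝓗] [CompleteSpace 𝓗]
    (U : G →* (𝓗 →L[ℂ] 𝓗))
    (hUcont : ∀ ξ : 𝓗, Continuous fun g => U g ξ)
    (hUunit : ∀ (g : G) (x y : 𝓗), inner ℂ (U g x) (U g y) = (inner ℂ x y : ℂ)) :
    HarmonicallyProper μ₂ (U.comp H₂.subtype) (U.comp H₂.subtype)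
        (isoProj μ₁ (U.comp H₁.subtype) σ) ∧
      isoProj μ₁ (U.comp H₁.subtype) σ ∈ AH μ₂ (U.comp H₂.subtype) (U.comp H₂.subtype) := by
  haveI hc1 : CompactSpace H₁ := isCompact_iff_compactSpace.mp hH₁.isCompact
  haveI hc2 : CompactSpace H₂ := isCompact_iff_compactSpace.mp hH₂.isCompact
  set U₁ : (H₁ : Type) →* (𝓗 →L[ℂ] 𝓗) := U.comp H₁.subtype with hU₁
  set U₂ : (H₂ : Type) →* (𝓗 →L[ℂ] 𝓗) := U.comp H₂.subtype with hU₂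
  have hU₂c : ∀ ξ : 𝓗, Continuous fun k : H₂ => U₂ k ξ := fun ξ =>
    (hUcont ξ).comp continuous_subtype_val
  set B := isoProj μ₁ U₁ σ with hB
  have HP : HarmonicallyProper μ₂ U₂ U₂ B := by
    intro σ' hσ'
    refine Set.Finite.subset (Set.finite_singleton σ'.char) ?_
    rintro χ ⟨τ, hτirr, rfl, hor⟩
    simp only [Set.mem_singleton_iff]
    by_contra hne
    by_cases hIB : Integrable (fun h : H₁ => (conj (σ.char h)) • U₁ h) μ₁
    swap
    · have hB0 : B = 0 := isoProj_eq_zero μ₁ U₁ σ hIB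
      rcases hor with h | h <;> simp [hB0] at h
    by_cases hIτ : Integrable (fun k : H₂ => (conj (τ.char k)) • U₂ k) μ₂
    swap
    · have h0 : isoProj μ₂ U₂ τ = 0 := isoProj_eq_zero μ₂ U₂ τ hIτ
      rcases hor with h | h <;> simp [h0] at h
    by_cases hIσ' : Integrable (fun k : H₂ => (conj (σ'.char k)) • U₂ k) μ₂
    swap
    · have h0 : isoProj μ₂ U₂ σ' = 0 := isoProj_eq_zero μ₂ U₂ σ' hIσ'
      rcases hor with h | h <;> simp [h0] at h
    have hcomm : ∀ ρ : FinUnitaryRep H₂,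
        Integrable (fun k : H₂ => (conj (ρ.char k)) • U₂ k) μ₂ →
        B.comp (isoProj μ₂ U₂ ρ) = (isoProj μ₂ U₂ ρ).comp B := by
      intro ρ hIρ
      rcases hnested with h12 | h21
      · have hρU : ∀ k : H₂, (U₂ k).comp (isoProj μ₂ U₂ ρ)
            = (isoProj μ₂ U₂ ρ).comp (U₂ k) :=
          fun k => isoProj_comm_U μ₂ U₂ ρ hIρ k
        have hρU₁ : ∀ h : H₁, (isoProj μ₂ U₂ ρ).comp (U₁ h)
            = (U₁ h).comp (isoProj μ₂ U₂ ρ) := by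
          intro h
          have e : U₁ h = U₂ ⟨(h : G), h12 h.2⟩ := rfl
          rw [e, ← hρU]
        exact (isoProj_comm μ₁ U₁ σ (isoProj μ₂ U₂ ρ) hρU₁).symm
      · have hBU : ∀ h : H₁, (U₁ h).comp B = B.comp (U₁ h) :=
          fun h => isoProj_comm_U μ₁ U₁ σ hIB h
        have hBU₂ : ∀ k : H₂, B.comp (U₂ k) = (U₂ k).comp B := by
          intro k
          have e : U₂ k = U₁ ⟨(k : G), h21 k.2⟩ := rfl
          rw [e, ← hBU]
        exact isoProj_comm μ₂ U₂ ρ B hBU₂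
    have horth1 : (isoProj μ₂ U₂ σ').comp (isoProj μ₂ U₂ τ) = 0 :=
      isoProj_orthogonal μ₂ U₂ hU₂c σ' τ hσ' hτirr (Ne.symm hne)
    have horth2 : (isoProj μ₂ U₂ τ).comp (isoProj μ₂ U₂ σ') = 0 :=
      isoProj_orthogonal μ₂ U₂ hU₂c τ σ' hτirr hσ' hne
    have hz1 : (isoProj μ₂ U₂ σ').comp (B.comp (isoProj μ₂ U₂ τ)) = 0 := by
      rw [hcomm τ hIτ, ← ContinuousLinearMap.comp_assoc, horth1,
        ContinuousLinearMap.zero_comp]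
    have hz2 : (isoProj μ₂ U₂ τ).comp (B.comp (isoProj μ₂ U₂ σ')) = 0 := by
      rw [hcomm σ' hIσ', ← ContinuousLinearMap.comp_assoc, horth2,
        ContinuousLinearMap.zero_comp]
    rcases hor with h | h
    · exact h hz1
    · exact h hz2
  exact ⟨HP, subset_closure HP⟩
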